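/- For the network ẋ = -Lx over a directed graph with no LSCCs, a popular node v (a node with at least two incoming edges) is a CF node if and only if all acyclic directed paths from any leader node to v share at least one common node other than v. -/

import Mathlib

/-- Conditions (C1) and (C2): `G[S]` has a directed spanning tree, and either no
node of `S`, or exactly one node of `S` which is a root of `G[S]`, has incoming
edges from outside `S`. -/
def SatC1C2 {V : Type*} (E : V → V → Prop) (S : Set V) : Prop :=
  (∃ r ∈ S, ∀ j ∈ S,
    Relation.ReflTransGen (fun a b => a ∈ S ∧ b ∈ S ∧ E a b) r j) ∧
  ((∀ i ∈ S, ∀ j ∉ S, ¬ E j i) ∨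
    ∃ r ∈ S,
      (∀ j ∈ S, Relation.ReflTransGen (fun a b => a ∈ S ∧ b ∈ S ∧ E a b) r j) ∧
      (∃ j ∉ S, E j r) ∧
      ∀ i ∈ S, (∃ j ∉ S, E j i) → i = r)

/-- A topological cluster, by the characterization theorem: a nonempty maximal
set satisfying (C1) and (C2). -/
def TopCluster {V : Type*} (E : V → V → Prop) (S : Set V) : Prop :=
  S.Nonempty ∧ SatC1C2 E S ∧ ∀ S' : Set V, S ⊆ S' → SatC1C2 E S' → S' = S

/-- `v` is the cluster-root (CR) node of cluster `S`: it belongs to `S` and is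
either a leader node (no incoming edges in `G`) or a root of `G[S]` having
incoming edges from outside `S`. -/
def IsCR {V : Type*} (E : V → V → Prop) (S : Set V) (v : V) : Prop :=
  v ∈ S ∧ ((∀ j, ¬ E j v) ∨
    ((∀ j ∈ S, Relation.ReflTransGen (fun a b => a ∈ S ∧ b ∈ S ∧ E a b) v j) ∧
      ∃ j ∉ S, E j v))

/-- The graph has no leader-like strongly connected component: no nonempty,
internally strongly connected node set containing an edge and receiving no
incoming edge from outside. -/
def NoLSCC {V : Type*} (E : V → V → Prop) : Prop :=
  ¬ ∃ S : Set V,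
    (∃ a ∈ S, ∃ b ∈ S, E a b) ∧
    (∀ a ∈ S, ∀ b ∈ S,
      Relation.ReflTransGen (fun x y => x ∈ S ∧ y ∈ S ∧ E x y) a b) ∧
    (∀ i ∈ S, ∀ j ∉ S, ¬ E j i)

/-- `p` is an acyclic directed path (no repeated nodes) starting at a leader node
(a node with no incoming edges) and ending at `v`. -/
def AcyclicLeaderPath {V : Type*} (E : V → V → Prop) (v : V) (p : List V) : Prop :=
  p.Nodup ∧ p.Chain' E ∧
    (∃ ℓ, p.head? = some ℓ ∧ ∀ j, ¬ E j ℓ) ∧ p.getLast? = some v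

open Relation List

private lemma restrictReach {V : Type*} {r : V → V → Prop} {C : Set V}
    (hC : ∀ u c, r u c → c ∈ C → u ∈ C) :
    ∀ {p q : V}, ReflTransGen r p q → q ∈ C →
      ReflTransGen (fun a b => a ∈ C ∧ b ∈ C ∧ r a b) p q ∧ p ∈ C := by
  intro p q hpq
  induction hpq with
  | refl => intro hq; exact ⟨.refl, hq⟩
  | tail h1 h2 ih =>
    intro hq
    have hc := hC _ _ h2 hq
    obtain ⟨hp, hpC⟩ := ih hc
    exact ⟨hp.tail ⟨hc, hq, h2⟩, hpC⟩

private lemma exists_nodup_chain' {V : Type*} {r : V → V → Prop} {a b : V}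
    (h : ReflTransGen r a b) :
    ∃ p : List V, p.Nodup ∧ p.Chain' r ∧ p.head? = some a ∧ p.getLast? = some b := by
  induction h using ReflTransGen.head_induction_on with
  | refl => exact ⟨[b], by simp, List.isChain_singleton _, rfl, by simp⟩
  | head hac hcb ih =>
    obtain ⟨p, hnd, hch, hhd, hlast⟩ := ih
    rename_i a' c'
    by_cases hap : a' ∈ p
    · obtain ⟨s, t, rfl⟩ := List.append_of_mem hap
      refine ⟨a' :: t, hnd.sublist (List.sublist_append_right s (a' :: t)), ?_, rfl, ?_⟩
      · exact hch.right_of_append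
      · cases hlt : (a' :: t).getLast? with
        | none => simp at hlt
        | some y =>
          rw [List.getLast?_append, hlt] at hlast
          simp at hlast
          simp [hlast]
    · refine ⟨a' :: p, List.nodup_cons.mpr ⟨hap, hnd⟩, ?_, rfl, ?_⟩
      · refine List.isChain_cons.mpr ⟨?_, hch⟩
        intro y hy
        rw [hhd] at hy
        simp at hy
        exact hy ▸ hac
      · cases p with
        | nil => simp at hhd
        | cons x xs => rw [List.getLast?_cons_cons]; exact hlast


private lemma leader_reaches {V : Type*} [Fintype V] {E : V → V → Prop}
    (h : ¬ ∃ S : Set V,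
      (∃ a ∈ S, ∃ b ∈ S, E a b) ∧
      (∀ a ∈ S, ∀ b ∈ S,
        Relation.ReflTransGen (fun x y => x ∈ S ∧ y ∈ S ∧ E x y) a b) ∧
      (∀ i ∈ S, ∀ j ∉ S, ¬ E j i)) (x : V) :
    ∃ ℓ, (∀ j, ¬ E j ℓ) ∧ ReflTransGen E ℓ x := by
  by_contra hno
  push_neg at hno
  set B : Set V := {y | ReflTransGen E y x} with hB
  set anc : V → Set V := fun y => {u | ReflTransGen E u y} with hanc
  obtain ⟨z, hzB, hmin⟩ := Set.exists_min_image B (fun y => (anc y).ncard)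
    (Set.toFinite _) ⟨x, ReflTransGen.refl⟩
  set C : Set V := {u | ReflTransGen E u z ∧ ReflTransGen E z u} with hC
  have hCpred : ∀ u c, E u c → c ∈ C → u ∈ C := by
    intro u c huc hc
    have hucz : ReflTransGen E u z := (ReflTransGen.single huc).trans hc.1
    have huB : u ∈ B := hucz.trans hzB
    have hsub : anc u ⊆ anc z := fun t ht => ht.trans hucz
    have heq : anc u = anc z :=
      Set.eq_of_subset_of_ncard_le hsub (hmin u huB) (Set.toFinite _)
    have hzu : ReflTransGen E z u := by
      have : z ∈ anc z := ReflTransGen.refl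
      rw [← heq] at this
      exact this
    exact ⟨hucz, hzu⟩
  have hzC : z ∈ C := ⟨ReflTransGen.refl, ReflTransGen.refl⟩
  have hzin : ∃ a, E a z := by
    by_contra hn
    push_neg at hn
    exact hno z hn hzB
  obtain ⟨a, ha⟩ := hzin
  have haC : a ∈ C := hCpred a z ha hzC
  apply h
  refine ⟨C, ⟨a, haC, z, hzC, ha⟩, ?_, ?_⟩
  · intro p hp q hq
    have h1 := (restrictReach hCpred hp.1 hzC).1
    have h2 := (restrictReach hCpred hq.2 hq).1
    exact h1.trans h2
  · intro i hi j hj hji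
    exact hj (hCpred j i hji hi)

private lemma mem_of_head?_eq {V : Type*} {p : List V} {a : V} (h : p.head? = some a) :
    a ∈ p := by
  cases p with
  | nil => simp at h
  | cons x xs => simp at h; simp [h]

private lemma mem_chain'_head_or {V : Type*} {r : V → V → Prop} :
    ∀ (p : List V) (a : V), (a :: p).Chain' r → ∀ x ∈ a :: p, x = a ∨ ∃ y, r y x := by
  intro p
  induction p with
  | nil => intro a _ x hx; left; simpa using hx
  | cons b t ih =>
    intro a hch x hx
    rcases List.mem_cons.mp hx with rfl | hx'
    · exact Or.inl rfl
    · rcases ih b (List.isChain_cons_cons.mp hch).2 x hx' with rfl | hy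
      · exact Or.inr ⟨a, (List.isChain_cons_cons.mp hch).1⟩
      · exact Or.inr hy

private lemma chain'_all_mem {V : Type*} {E : V → V → Prop} {S : Set V}
    (hcl : ∀ x y, E x y → y ∈ S → x ∈ S) :
    ∀ (p : List V) (v : V), p.Chain' E → p.getLast? = some v → v ∈ S → ∀ x ∈ p, x ∈ S := by
  intro p
  induction p with
  | nil => intro v _ _ _ x hx; simp at hx
  | cons a t ih =>
    intro v hch hlast hvS x hx
    cases t with
    | nil =>
      simp at hlast hx
      rw [hx, hlast]; exact hvS
    | cons b t' =>
      rw [List.getLast?_cons_cons] at hlast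
      have hall := ih v (List.isChain_cons_cons.mp hch).2 hlast hvS
      rcases List.mem_cons.mp hx with rfl | hx'
      · exact hcl x b (List.isChain_cons_cons.mp hch).1 (hall b (by simp))
      · exact hall x hx'

private lemma first_entry {V : Type*} {E : V → V → Prop} {S : Set V} :
    ∀ (p : List V) (h0 v : V), p.Chain' E → p.head? = some h0 → p.getLast? = some v →
      h0 ∉ S → v ∈ S → ∃ y ∈ p, y ∈ S ∧ ∃ x, x ∉ S ∧ E x y := by
  intro p
  induction p with
  | nil => intro h0 v _ hh _ _ _; simp at hh
  | cons a t ih =>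
    intro h0 v hch hh hlast h0S hvS
    simp at hh
    cases t with
    | nil =>
      simp at hlast
      rw [← hh, hlast] at h0S
      exact absurd hvS h0S
    | cons b t' =>
      rw [List.getLast?_cons_cons] at hlast
      by_cases hbS : b ∈ S
      · exact ⟨b, by simp, hbS, a, hh ▸ h0S, (List.isChain_cons_cons.mp hch).1⟩
      · obtain ⟨y, hy, hyS, hx⟩ := ih b v (List.isChain_cons_cons.mp hch).2 rfl hlast hbS hvS
        exact ⟨y, List.mem_cons_of_mem _ hy, hyS, hx⟩

private theorem stmt16_aux {V : Type*} [Fintype V] (E : V → V → Prop)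
    (h : ¬ ∃ S : Set V,
      (∃ a ∈ S, ∃ b ∈ S, E a b) ∧
      (∀ a ∈ S, ∀ b ∈ S,
        Relation.ReflTransGen (fun x y => x ∈ S ∧ y ∈ S ∧ E x y) a b) ∧
      (∀ i ∈ S, ∀ j ∉ S, ¬ E j i))
    (v : V) (hpop : ∃ j k : V, j ≠ k ∧ E j v ∧ E k v)
    (S : Set V)
    (hS : S.Nonempty ∧
      ((∃ r ∈ S, ∀ j ∈ S, Relation.ReflTransGen (fun a b => a ∈ S ∧ b ∈ S ∧ E a b) r j) ∧
       ((∀ i ∈ S, ∀ j ∉ S, ¬ E j i) ∨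
        ∃ r ∈ S,
          (∀ j ∈ S, Relation.ReflTransGen (fun a b => a ∈ S ∧ b ∈ S ∧ E a b) r j) ∧
          (∃ j ∉ S, E j r) ∧
          ∀ i ∈ S, (∃ j ∉ S, E j i) → i = r)) ∧
      ∀ S' : Set V, S ⊆ S' →
        ((∃ r ∈ S', ∀ j ∈ S', Relation.ReflTransGen (fun a b => a ∈ S' ∧ b ∈ S' ∧ E a b) r j) ∧
         ((∀ i ∈ S', ∀ j ∉ S', ¬ E j i) ∨
          ∃ r ∈ S',
            (∀ j ∈ S', Relation.ReflTransGen (fun a b => a ∈ S' ∧ b ∈ S' ∧ E a b) r j) ∧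
            (∃ j ∉ S', E j r) ∧
            ∀ i ∈ S', (∃ j ∉ S', E j i) → i = r)) → S' = S)
    (hv : v ∈ S) :
    ¬ (v ∈ S ∧ ((∀ j, ¬ E j v) ∨
      ((∀ j ∈ S, Relation.ReflTransGen (fun a b => a ∈ S ∧ b ∈ S ∧ E a b) v j) ∧
        ∃ j ∉ S, E j v))) ↔
      ∃ w : V, w ≠ v ∧ ∀ p : List V,
        (p.Nodup ∧ p.Chain' E ∧
          (∃ ℓ, p.head? = some ℓ ∧ ∀ j, ¬ E j ℓ) ∧ p.getLast? = some v) → w ∈ p := by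
  obtain ⟨j0, k0, hjk, hj0, hk0⟩ := hpop
  obtain ⟨hSne, ⟨⟨r0, hr0S, hr0sp⟩, hC2⟩, hmax⟩ := hS
  constructor
  · intro hnCR
    rcases hC2 with h1 | ⟨r, hrS, hrsp, ⟨je, hje, hEje⟩, huniq⟩
    · -- no external in-edges into S; show r0 is a leader
      have hld : ∀ j, ¬ E j r0 := by
        intro a ha
        have haS : a ∈ S := by
          by_contra haS; exact h1 r0 hr0S a haS ha
        set relS := fun x y => x ∈ S ∧ y ∈ S ∧ E x y with hrelS
        set C : Set V := {x | ReflTransGen relS r0 x ∧ ReflTransGen relS x r0} with hCdef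
        have hCpred : ∀ u c, relS u c → c ∈ C → u ∈ C := by
          intro u c huc hc
          exact ⟨hr0sp u huc.1, (ReflTransGen.single huc).trans hc.2⟩
        have hr0C : r0 ∈ C := ⟨ReflTransGen.refl, ReflTransGen.refl⟩
        have haC : a ∈ C := hCpred a r0 ⟨haS, hr0S, ha⟩ hr0C
        apply h
        refine ⟨C, ⟨a, haC, r0, hr0C, ha⟩, ?_, ?_⟩
        · intro p hp q hq
          have h1' := (restrictReach hCpred hp.2 hr0C).1
          have h2' := (restrictReach hCpred hq.1 hq).1
          have hmono : ∀ x y, (x ∈ C ∧ y ∈ C ∧ relS x y) → (x ∈ C ∧ y ∈ C ∧ E x y) :=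
            fun x y hxy => ⟨hxy.1, hxy.2.1, hxy.2.2.2.2⟩
          exact (ReflTransGen.mono hmono _ _ h1').trans (ReflTransGen.mono hmono _ _ h2')
        · intro i hi j hj hji
          have hiS : i ∈ S := by
            rcases hi.2.cases_head with rfl | ⟨c, hc, _⟩
            · exact hr0S
            · exact hc.1
          have hjS : j ∈ S := by
            by_contra hjS; exact h1 i hiS j hjS hji
          exact hj (hCpred j i ⟨hjS, hiS, hji⟩ hi)
      have hvne : r0 ≠ v := by
        rintro rfl; exact hnCR ⟨hv, Or.inl hld⟩
      refine ⟨r0, hvne, ?_⟩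
      rintro p ⟨hnd, hch, ⟨ℓ, hhd, hℓ⟩, hlast⟩
      have hallS : ∀ x ∈ p, x ∈ S :=
        chain'_all_mem (fun x y hxy hyS => by
          by_contra hxS; exact h1 y hyS x hxS hxy) p v hch hlast hv
      have hℓS : ℓ ∈ S := hallS ℓ (mem_of_head?_eq hhd)
      have hℓr0 : ℓ = r0 := by
        rcases (hr0sp ℓ hℓS).cases_tail with h' | ⟨c, _, hc⟩
        · exact h'
        · exact absurd hc.2.2 (hℓ c)
      rw [← hℓr0]
      exact mem_of_head?_eq hhd
    · -- unique entry node r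
      have hvner : r ≠ v := by
        rintro rfl; exact hnCR ⟨hv, Or.inr ⟨hrsp, je, hje, hEje⟩⟩
      refine ⟨r, hvner, ?_⟩
      rintro p ⟨hnd, hch, ⟨ℓ, hhd, hℓ⟩, hlast⟩
      have hℓS : ℓ ∉ S := by
        intro hins
        rcases (hrsp ℓ hins).cases_tail with h' | ⟨c, _, hc⟩
        · exact hℓ je (h' ▸ hEje)
        · exact hℓ c hc.2.2
      obtain ⟨y, hyp, hyS, x, hxS, hxy⟩ := first_entry p ℓ v hch hhd hlast hℓS hv
      have hyr : y = r := huniq y hyS ⟨x, hxS, hxy⟩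
      exact hyr ▸ hyp
  · -- backward
    rintro ⟨w, hwv, hwall⟩ ⟨-, hCR⟩
    rcases hCR with hld | ⟨hvsp, j1, hj1S, hEj1⟩
    · exact hld j0 hj0
    set E' := fun a b => E a b ∧ a ≠ w ∧ b ≠ w with hE'
    set Z : Set V := {x | x ≠ w ∧ ¬ ∃ ℓ, (∀ j, ¬ E j ℓ) ∧ ReflTransGen E' ℓ x} with hZdef
    set T : Set V := insert w Z with hTdef
    have hwT : w ∈ T := Set.mem_insert _ _
    have hZT : Z ⊆ T := Set.subset_insert _ _
    have hfact1 : ∀ x z, E x z → z ∈ Z → x ∈ T := by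
      intro x z hxz hz
      by_contra hxT
      have hxw : x ≠ w := fun hh => hxT (hh ▸ hwT)
      have hxZ : x ∉ Z := fun hh => hxT (hZT hh)
      have hex : ∃ ℓ, (∀ j, ¬ E j ℓ) ∧ ReflTransGen E' ℓ x := by
        by_contra hn; exact hxZ ⟨hxw, hn⟩
      obtain ⟨ℓ, hℓ, hreach⟩ := hex
      exact hz.2 ⟨ℓ, hℓ, hreach.tail ⟨hxz, hxw, hz.1⟩⟩
    have hvZ : v ∈ Z := by
      refine ⟨Ne.symm hwv, ?_⟩
      rintro ⟨ℓ, hℓ, hreach⟩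
      have hℓw : ℓ ≠ w := by
        rcases hreach.cases_head with rfl | ⟨c, hc, _⟩
        · exact Ne.symm hwv
        · exact hc.2.1
      obtain ⟨p, hnd, hch, hhd, hlast⟩ := exists_nodup_chain' hreach
      have hwnp : w ∉ p := by
        intro hwp
        cases p with
        | nil => simp at hwp
        | cons a t =>
          simp at hhd
          rcases mem_chain'_head_or t a hch w hwp with rfl | ⟨y, hy⟩
          · exact hℓw hhd.symm
          · exact hy.2.2 rfl
      exact hwnp (hwall p ⟨hnd, hch.imp (fun _ _ hh => hh.1), ⟨ℓ, hhd, hℓ⟩, hlast⟩)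
    set relT := fun a b => a ∈ T ∧ b ∈ T ∧ E a b with hrelT
    have hreachT : ∀ z ∈ Z, ReflTransGen relT w z := by
      intro z hz
      obtain ⟨ℓ, hℓ, hr⟩ := leader_reaches h z
      have key : ∀ z', ReflTransGen E ℓ z' → z' ∈ Z → ReflTransGen relT w z' := by
        intro z' hr'
        induction hr' with
        | refl => intro hℓZ; exact absurd ⟨ℓ, hℓ, ReflTransGen.refl⟩ hℓZ.2
        | @tail c z'' h1 h2 ih =>
          intro hzZ
          by_cases hcw : c = w
          · exact ReflTransGen.single ⟨hwT, hZT hzZ, hcw ▸ h2⟩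
          · by_cases hcZ : c ∈ Z
            · exact (ih hcZ).tail ⟨hZT hcZ, hZT hzZ, h2⟩
            · have hex : ∃ ℓ', (∀ j, ¬ E j ℓ') ∧ ReflTransGen E' ℓ' c := by
                by_contra hn; exact hcZ ⟨hcw, hn⟩
              obtain ⟨ℓ', hℓ', hrc⟩ := hex
              exact absurd ⟨ℓ', hℓ', hrc.tail ⟨h2, hcw, hzZ.1⟩⟩ hzZ.2
      exact key z hr hz
    set S' : Set V := S ∪ T with hS'def
    have hST : T ⊆ S' := Set.subset_union_right
    have hSS : S ⊆ S' := Set.subset_union_left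
    have hwS' : w ∈ S' := hST hwT
    set relS' := fun a b => a ∈ S' ∧ b ∈ S' ∧ E a b with hrelS'
    have hmonoT : ∀ x y, relT x y → relS' x y :=
      fun x y hxy => ⟨hST hxy.1, hST hxy.2.1, hxy.2.2⟩
    have hmonoS : ∀ x y, (x ∈ S ∧ y ∈ S ∧ E x y) → relS' x y :=
      fun x y hxy => ⟨hSS hxy.1, hSS hxy.2.1, hxy.2.2⟩
    have hwsp : ∀ jj ∈ S', ReflTransGen relS' w jj := by
      intro jj hjj
      rcases hjj with hjjS | hjjT
      · exact (ReflTransGen.mono hmonoT _ _ (hreachT v hvZ)).trans (ReflTransGen.mono hmonoS _ _ (hvsp jj hjjS))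
      · rcases hjjT with rfl | hjjZ
        · exact ReflTransGen.refl
        · exact ReflTransGen.mono hmonoT _ _ (hreachT jj hjjZ)
    have huniq' : ∀ i ∈ S', (∃ jj, jj ∉ S' ∧ E jj i) → i = w := by
      rintro i hi ⟨jj, hjjS', hjji⟩
      by_cases hiw : i = w
      · exact hiw
      by_cases hiZ : i ∈ Z
      · exact absurd (hST (hfact1 jj i hjji hiZ)) hjjS'
      have hiS : i ∈ S := by
        rcases hi with hh | hh
        · exact hh
        · rcases hh with rfl | hh
          · exact absurd rfl hiw
          · exact absurd hh hiZ
      have hjjS : jj ∉ S := fun hh => hjjS' (hSS hh)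
      rcases hC2 with h1 | ⟨r, hrS, hrsp, _, huniq⟩
      · exact absurd hjji (h1 i hiS jj hjjS)
      · have hir : i = r := huniq i hiS ⟨jj, hjjS, hjji⟩
        have hvr : v = r := huniq v hv ⟨j1, hj1S, hEj1⟩
        rw [hir, ← hvr] at hiZ
        exact absurd hvZ hiZ
    have hSat : (∃ r ∈ S', ∀ j ∈ S', ReflTransGen relS' r j) ∧
        ((∀ i ∈ S', ∀ j ∉ S', ¬ E j i) ∨
          ∃ r ∈ S', (∀ j ∈ S', ReflTransGen relS' r j) ∧
            (∃ j ∉ S', E j r) ∧ ∀ i ∈ S', (∃ j ∉ S', E j i) → i = r) := by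
      refine ⟨⟨w, hwS', hwsp⟩, ?_⟩
      by_cases hP : ∃ jj, jj ∉ S' ∧ E jj w
      · exact Or.inr ⟨w, hwS', hwsp, ⟨hP.choose, hP.choose_spec.1, hP.choose_spec.2⟩,
          fun i hi hex => huniq' i hi ⟨hex.choose, hex.choose_spec.1, hex.choose_spec.2⟩⟩
      · left
        intro i hi jj hjj hEjj
        have hiw := huniq' i hi ⟨jj, hjj, hEjj⟩
        exact hP ⟨jj, hjj, hiw ▸ hEjj⟩
    have hS'eq : S' = S := hmax S' hSS hSat
    have hj1T : j1 ∈ T := hfact1 j1 v hEj1 hvZ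
    have hj1S' : j1 ∈ S := by rw [← hS'eq]; exact hST hj1T
    exact hj1S hj1S'

/-- In a graph with no LSCCs, a popular node `v` (at least two incoming edges),
belonging to a topological cluster `S`, is a CF node (not the CR node of `S`)
iff all acyclic directed paths from any leader node to `v` share a common node
other than `v`. -/
theorem stmt16 {V : Type*} [Fintype V] (E : V → V → Prop) (h : NoLSCC E)
    (v : V) (hpop : ∃ j k : V, j ≠ k ∧ E j v ∧ E k v)
    (S : Set V) (hS : TopCluster E S) (hv : v ∈ S) :
    ¬ IsCR E S v ↔
      ∃ w : V, w ≠ v ∧ ∀ p : List V, AcyclicLeaderPath E v p → w ∈ p := by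
  exact stmt16_aux E h v hpop S hS hv
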